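/- Let X be a quasi-normed lattice with quasi-triangle constant K. Then X is complete if and only if for every sequence of positive elements (x_n) in X with ∑ K^n ‖x_n‖ < ∞, the supremum of the partial sums sup_n ∑_{i=1}^n x_i exists in X. -/

import Mathlib

open Filter

section RFhelpers
variable {X : Type*} [Lattice X] [AddCommGroup X] [CovariantClass X X (· + ·) (· ≤ ·)]

lemma rf_two_nonneg {a : X} (h : 0 ≤ a + a) : 0 ≤ a := by
  have h1 : -a ≤ a := sub_nonneg.mp (by rwa [sub_neg_eq_add])
  have h2 : a⁻ ≤ a⁺ := sup_le_sup_right h1 0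
  have h3 : a⁻ ≤ 0 := by
    calc a⁻ ≤ a⁺ ⊓ a⁻ := le_inf h2 le_rfl
    _ = 0 := posPart_inf_negPart_eq_zero a
  have h4 : -a ≤ 0 := le_trans (neg_le_negPart a) h3
  simpa using neg_nonpos.mp h4

variable [Module ℝ X]

lemma rf_pow_nonneg (n : ℕ) {a : X} (h : 0 ≤ ((2:ℝ)^n) • a) : 0 ≤ a := by
  induction n generalizing a with
  | zero => simpa using h
  | succ n ih =>
    have h2 : ((2:ℝ)^n) • (a + a) = ((2:ℝ)^(n+1)) • a := by
      rw [smul_add, ← add_smul]; ring_nf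
    exact rf_two_nonneg (ih (by rw [h2]; exact h))

lemma rf_pow_le (n : ℕ) {a b : X} (h : ((2:ℝ)^n) • a ≤ ((2:ℝ)^n) • b) : a ≤ b := by
  have h' : (0:X) ≤ ((2:ℝ)^n) • (b - a) := by rw [smul_sub]; exact sub_nonneg.mpr h
  exact sub_nonneg.mp (rf_pow_nonneg n h')

lemma rf_cast_smul_nonneg (n : ℕ) {a : X} (ha : 0 ≤ a) : 0 ≤ ((n:ℝ)) • a := by
  rw [Nat.cast_smul_eq_nsmul]; exact nsmul_nonneg ha n

lemma rf_pow_smul_nonneg (k : ℕ) {a : X} (ha : 0 ≤ a) : 0 ≤ ((2:ℝ)^k) • a := by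
  have h : ((2:ℝ)^k) = ((2^k : ℕ) : ℝ) := by push_cast; ring
  rw [h]; exact rf_cast_smul_nonneg _ ha

lemma rf_pow_smul_mono {n i : ℕ} (h : n ≤ i) {a : X} (ha : 0 ≤ a) :
    ((2:ℝ)^n) • a ≤ ((2:ℝ)^i) • a := by
  have h1 : (0:X) ≤ (((2^i - 2^n : ℕ)):ℝ) • a := rf_cast_smul_nonneg _ ha
  have h2 : (((2^i - 2^n : ℕ)):ℝ) = (2:ℝ)^i - (2:ℝ)^n := by
    rw [Nat.cast_sub (Nat.pow_le_pow_right (by norm_num) h)]; push_cast; ring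
  rw [h2, sub_smul] at h1
  exact sub_nonneg.mp (by simpa using h1)

lemma rf_sum_bound (N : X → ℝ) (K : ℝ) (hK : 1 ≤ K)
    (hN0 : N 0 = 0)
    (htri : ∀ x y, N (x + y) ≤ K * (N x + N y)) :
    ∀ (n : ℕ) (g : ℕ → X),
      N (∑ i ∈ Finset.range n, g i) ≤ ∑ i ∈ Finset.range n, K^(i+1) * N (g i) := by
  intro n
  induction n with
  | zero => intro g; simp [hN0]
  | succ n ih =>
    intro g
    rw [Finset.sum_range_succ']
    have hK0 : (0:ℝ) ≤ K := le_trans zero_le_one hK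
    calc N ((∑ i ∈ Finset.range n, g (i+1)) + g 0)
        ≤ K * (N (∑ i ∈ Finset.range n, g (i+1)) + N (g 0)) := htri _ _
      _ ≤ K * ((∑ i ∈ Finset.range n, K^(i+1) * N (g (i+1))) + N (g 0)) := by
          have h := ih (fun i => g (i+1))
          exact mul_le_mul_of_nonneg_left (add_le_add_left h _) hK0
      _ = (∑ i ∈ Finset.range n, K^(i+1+1) * N (g (i+1))) + K^(0+1) * N (g 0) := by
          rw [mul_add, Finset.mul_sum]
          congr 1
          · exact Finset.sum_congr rfl (fun i _ => by ring)
          · ring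
      _ = ∑ i ∈ Finset.range (n+1), K^(i+1) * N (g i) := by
          rw [Finset.sum_range_succ' (fun i => K^(i+1) * N (g i)) n]

lemma rf_Ico_bound (N : X → ℝ) (K : ℝ) (hK : 1 ≤ K)
    (hnonneg : ∀ x, 0 ≤ N x) (hN0 : N 0 = 0)
    (htri : ∀ x y, N (x + y) ≤ K * (N x + N y))
    (x : ℕ → X) (a b : ℕ) :
    N (∑ i ∈ Finset.Ico a b, x i) ≤ ∑ i ∈ Finset.Ico a b, K^(i+1) * N (x i) := by
  rw [Finset.sum_Ico_eq_sum_range, Finset.sum_Ico_eq_sum_range]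
  calc N (∑ i ∈ Finset.range (b - a), x (a + i))
      ≤ ∑ i ∈ Finset.range (b - a), K^(i+1) * N (x (a + i)) :=
        rf_sum_bound N K hK hN0 htri _ _
    _ ≤ ∑ i ∈ Finset.range (b - a), K^(a+i+1) * N (x (a + i)) := by
        refine Finset.sum_le_sum (fun i _ => ?_)
        exact mul_le_mul_of_nonneg_right (pow_le_pow_right₀ hK (by omega)) (hnonneg _)

/-- Key lemma: under the Riesz–Fischer property, a positive sequence whose
norms decay like `(1/(4K))^(k+1)` has partial sums converging in quasi-norm
(namely to their supremum). -/
lemma rf_key (N : X → ℝ) (K : ℝ) (hK : 1 ≤ K)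
    (hnonneg : ∀ x, 0 ≤ N x)
    (hsmul : ∀ (a : ℝ) (x : X), N (a • x) = |a| * N x)
    (hlat : ∀ x y : X, |x| ≤ |y| → N x ≤ N y)
    (RF : ∀ x : ℕ → X, (∀ n, 0 ≤ x n) →
        Summable (fun n => K ^ (n + 1) * N (x n)) →
        ∃ s : X, IsLUB (Set.range fun n => ∑ i ∈ Finset.range (n + 1), x i) s)
    (v : ℕ → X) (hv0 : ∀ k, 0 ≤ v k)
    (hvN : ∀ k, N (v k) ≤ (1/(4*K))^(k+1)) :
    ∃ s : X, ∀ ε > (0:ℝ), ∃ n₀, ∀ n ≥ n₀,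
      N ((∑ i ∈ Finset.range (n+1), v i) - s) < ε := by
  letI : IsOrderedAddMonoid X :=
    { add_le_add_left := fun a b h c => add_le_add_left h c }
  have hK0 : (0:ℝ) < K := lt_of_lt_of_le zero_lt_one hK
  have hKinv : K * (1/(4*K)) = 1/4 := by field_simp
  have hg4 : Summable (fun k : ℕ => ((1:ℝ)/4)^(k+1)) := by
    have h := (summable_geometric_of_lt_one (by norm_num : (0:ℝ) ≤ 1/4)
      (by norm_num)).mul_left (1/4)
    refine h.congr fun k => ?_
    rw [pow_succ]; ring
  have hg2 : Summable (fun k : ℕ => ((1:ℝ)/2)^k) :=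
    summable_geometric_of_lt_one (by norm_num) (by norm_num)
  have hsum1 : Summable (fun k => K ^ (k + 1) * N (v k)) := by
    refine Summable.of_nonneg_of_le
      (fun k => mul_nonneg (by positivity) (hnonneg _)) (fun k => ?_) hg4
    calc K ^ (k+1) * N (v k) ≤ K ^ (k+1) * (1/(4*K))^(k+1) :=
          mul_le_mul_of_nonneg_left (hvN k) (by positivity)
      _ = (K * (1/(4*K)))^(k+1) := (mul_pow _ _ _).symm
      _ = (1/4)^(k+1) := by rw [hKinv]
  obtain ⟨s, hs⟩ := RF v hv0 hsum1
  set x : ℕ → X := fun k => ((2:ℝ)^k) • v k with hxdef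
  have hx0 : ∀ k, 0 ≤ x k := fun k => rf_pow_smul_nonneg k (hv0 k)
  have hsum2 : Summable (fun k => K ^ (k + 1) * N (x k)) := by
    refine Summable.of_nonneg_of_le
      (fun k => mul_nonneg (by positivity) (hnonneg _)) (fun k => ?_) hg2
    have hNx : N (x k) = (2:ℝ)^k * N (v k) := by
      show N (((2:ℝ)^k) • v k) = _
      rw [hsmul, abs_of_nonneg (by positivity : (0:ℝ) ≤ (2:ℝ)^k)]
    rw [hNx]
    calc K ^ (k+1) * ((2:ℝ)^k * N (v k))
        ≤ K ^ (k+1) * ((2:ℝ)^k * (1/(4*K))^(k+1)) := by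
          refine mul_le_mul_of_nonneg_left
            (mul_le_mul_of_nonneg_left (hvN k) (by positivity)) (by positivity)
      _ = (2:ℝ)^k * (K * (1/(4*K)))^(k+1) := by rw [mul_pow]; ring
      _ = (2:ℝ)^k * (1/4)^(k+1) := by rw [hKinv]
      _ = (1/4) * ((2:ℝ) * (1/4))^k := by rw [mul_pow, pow_succ]; ring
      _ ≤ (1/2)^k := by norm_num
  obtain ⟨u, hu⟩ := RF x hx0 hsum2
  set V : ℕ → X := fun n => ∑ i ∈ Finset.range (n+1), v i with hVdef
  set U : ℕ → X := fun n => ∑ i ∈ Finset.range (n+1), x i with hUdef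
  have hU0 : ∀ n, 0 ≤ U n := by
    intro n
    show (0:X) ≤ ∑ i ∈ Finset.range (n+1), x i
    exact Finset.sum_nonneg fun i _ => hx0 i
  have hUu : ∀ n, U n ≤ u := fun n => hu.1 ⟨n, rfl⟩
  have hVs : ∀ n, V n ≤ s := fun n => hs.1 ⟨n, rfl⟩
  have hu0 : 0 ≤ u := le_trans (hU0 0) (hUu 0)
  set c : ℕ → X := fun n => ((2:ℝ)^(n+1))⁻¹ • u with hcdef
  have hcu : ∀ n, ((2:ℝ)^(n+1)) • c n = u := by
    intro n
    show ((2:ℝ)^(n+1)) • (((2:ℝ)^(n+1))⁻¹ • u) = u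
    rw [smul_smul, mul_inv_cancel₀ (by positivity), one_smul]
  have hc0 : ∀ n, 0 ≤ c n := by
    intro n
    refine rf_pow_nonneg (n+1) ?_
    rw [hcu n]; exact hu0
  have hVmc : ∀ n m, V m ≤ V n + c n := by
    intro n m
    rcases le_or_gt m n with hmn | hnm
    · have hVmon : V m ≤ V n := by
        show (∑ i ∈ Finset.range (m+1), v i) ≤ ∑ i ∈ Finset.range (n+1), v i
        exact Finset.sum_le_sum_of_subset_of_nonneg
          (Finset.range_subset_range.mpr (by omega)) (fun i _ _ => hv0 i)
      exact le_trans hVmon (le_add_of_nonneg_right (hc0 n))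
    · have hVIco : V m - V n = ∑ i ∈ Finset.Ico (n+1) (m+1), v i :=
        (Finset.sum_Ico_eq_sub _ (by omega)).symm
      have hUIco : U m - U n = ∑ i ∈ Finset.Ico (n+1) (m+1), x i :=
        (Finset.sum_Ico_eq_sub _ (by omega)).symm
      have key : ((2:ℝ)^(n+1)) • (V m - V n) ≤ ((2:ℝ)^(n+1)) • c n := by
        rw [hcu n, hVIco, Finset.smul_sum]
        calc ∑ i ∈ Finset.Ico (n+1) (m+1), ((2:ℝ)^(n+1)) • v i
            ≤ ∑ i ∈ Finset.Ico (n+1) (m+1), x i := by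
              refine Finset.sum_le_sum (fun i hi => ?_)
              exact rf_pow_smul_mono
                (by simp only [Finset.mem_Ico] at hi; omega) (hv0 i)
          _ = U m - U n := hUIco.symm
          _ ≤ u := by
              calc U m - U n ≤ U m - 0 := sub_le_sub_left (hU0 n) _
                _ = U m := by abel
                _ ≤ u := hUu m
      have h2 : V m - V n ≤ c n := rf_pow_le (n+1) key
      calc V m = V n + (V m - V n) := by abel
        _ ≤ V n + c n := add_le_add_right h2 _
  have hsVn : ∀ n, s ≤ V n + c n := by
    intro n
    exact hs.2 (by rintro _ ⟨m, rfl⟩; exact hVmc n m)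
  have hNbound : ∀ n, N (V n - s) ≤ ((2:ℝ)^(n+1))⁻¹ * N u := by
    intro n
    have h1 : 0 ≤ s - V n := sub_nonneg.mpr (hVs n)
    have h2 : s - V n ≤ c n := by
      have h := hsVn n
      calc s - V n ≤ (V n + c n) - V n := sub_le_sub_right h _
        _ = c n := by abel
    have h3 : N (s - V n) ≤ N (c n) := by
      refine hlat _ _ ?_
      rw [abs_of_nonneg h1, abs_of_nonneg (hc0 n)]
      exact h2
    have h4 : N (c n) = ((2:ℝ)^(n+1))⁻¹ * N u := by
      show N (((2:ℝ)^(n+1))⁻¹ • u) = _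
      rw [hsmul, abs_of_nonneg (by positivity : (0:ℝ) ≤ ((2:ℝ)^(n+1))⁻¹)]
    have h5 : N (V n - s) = N (s - V n) := by
      have h := hsmul (-1) (s - V n)
      simp only [neg_one_smul, neg_sub, abs_neg, abs_one, one_mul] at h
      exact h
    rw [h5, ← h4]; exact h3
  refine ⟨s, fun ε hε => ?_⟩
  obtain ⟨n₀, hn₀⟩ : ∃ n₀ : ℕ, ((1:ℝ)/2)^n₀ * (N u + 1) < ε := by
    obtain ⟨n₀, hn₀⟩ := exists_pow_lt_of_lt_one
      (show (0:ℝ) < ε / (N u + 1) from div_pos hε (by have := hnonneg u; linarith))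
      (by norm_num : (1:ℝ)/2 < 1)
    refine ⟨n₀, ?_⟩
    rw [← lt_div_iff₀ (show (0:ℝ) < N u + 1 by have := hnonneg u; linarith)]
    exact hn₀
  refine ⟨n₀, fun n hn => ?_⟩
  have h6 : ((2:ℝ)^(n+1))⁻¹ * N u ≤ ((1:ℝ)/2)^n₀ * (N u + 1) := by
    have e1 : ((2:ℝ)^(n+1))⁻¹ ≤ ((1:ℝ)/2)^n₀ := by
      rw [← inv_pow]
      have h := pow_le_pow_of_le_one (by norm_num : (0:ℝ) ≤ 2⁻¹)
        (by norm_num : (2:ℝ)⁻¹ ≤ 1) (show n₀ ≤ n + 1 by omega)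
      simpa [one_div] using h
    exact mul_le_mul e1 (by linarith) (hnonneg u) (by positivity)
  exact lt_of_le_of_lt (le_trans (hNbound n) h6) hn₀

end RFhelpers

/-- **Riesz–Fischer type characterization of completeness in quasi-normed
lattices.** A quasi-normed lattice `X` with quasi-triangle constant `K` is
complete iff for every positive sequence `(xₙ)` with `∑ Kⁿ‖xₙ‖ < ∞` the
supremum of the partial sums exists in `X`. -/
theorem stmt_2 {X : Type*} [Lattice X] [AddCommGroup X]
    [CovariantClass X X (· + ·) (· ≤ ·)] [Module ℝ X]
    (N : X → ℝ) (K : ℝ) (hK : 1 ≤ K)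
    (hnonneg : ∀ x, 0 ≤ N x)
    (heq0 : ∀ x, N x = 0 ↔ x = 0)
    (hsmul : ∀ (a : ℝ) (x : X), N (a • x) = |a| * N x)
    (htri : ∀ x y, N (x + y) ≤ K * (N x + N y))
    (hlat : ∀ x y : X, |x| ≤ |y| → N x ≤ N y) :
    (∀ f : ℕ → X,
        (∀ ε : ℝ, 0 < ε → ∃ n₀, ∀ m ≥ n₀, ∀ n ≥ n₀, N (f m - f n) < ε) →
        ∃ l : X, Tendsto (fun n => N (f n - l)) atTop (nhds 0)) ↔
    (∀ x : ℕ → X, (∀ n, 0 ≤ x n) →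
        Summable (fun n => K ^ (n + 1) * N (x n)) →
        ∃ s : X, IsLUB (Set.range fun n => ∑ i ∈ Finset.range (n + 1), x i) s) := by
  letI : IsOrderedAddMonoid X :=
    { add_le_add_left := fun a b h c => add_le_add_left h c }
  have hK0 : (0:ℝ) < K := lt_of_lt_of_le zero_lt_one hK
  have hN0 : N 0 = 0 := (heq0 0).mpr rfl
  have hNneg : ∀ z : X, N (-z) = N z := by
    intro z
    have h := hsmul (-1) z
    simpa using h
  have hzero : ∀ w : X, (∀ δ > (0:ℝ), N w < δ) → w = 0 := by
    intro w h
    refine (heq0 w).mp (le_antisymm ?_ (hnonneg w))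
    by_contra hc
    push_neg at hc
    exact absurd (h (N w) hc) (lt_irrefl _)
  constructor
  · -- completeness → Riesz–Fischer property
    intro hcomp x hx0 hxsum
    set f : ℕ → X := fun n => ∑ i ∈ Finset.range (n+1), x i with hfdef
    set S : ℕ → ℝ := fun n => ∑ i ∈ Finset.range n, K^(i+1) * N (x i) with hSdef
    have hScauchy : CauchySeq S := (hxsum.hasSum.tendsto_sum_nat).cauchySeq
    have hSc := Metric.cauchySeq_iff.mp hScauchy
    have hblock : ∀ m n : ℕ, n ≤ m → N (f m - f n) ≤ S (m+1) - S (n+1) := by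
      intro m n hnm
      have h1 : f m - f n = ∑ i ∈ Finset.Ico (n+1) (m+1), x i :=
        (Finset.sum_Ico_eq_sub _ (by omega)).symm
      rw [h1]
      calc N (∑ i ∈ Finset.Ico (n+1) (m+1), x i)
          ≤ ∑ i ∈ Finset.Ico (n+1) (m+1), K^(i+1) * N (x i) :=
            rf_Ico_bound N K hK hnonneg hN0 htri x _ _
        _ = S (m+1) - S (n+1) := Finset.sum_Ico_eq_sub _ (by omega)
    have hfc : ∀ ε : ℝ, 0 < ε → ∃ n₀, ∀ m ≥ n₀, ∀ n ≥ n₀, N (f m - f n) < ε := by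
      intro ε hε
      obtain ⟨B, hB⟩ := hSc ε hε
      refine ⟨B, fun m hm n hn => ?_⟩
      rcases le_total n m with h | h
      · have hb := hblock m n h
        have hd := hB (m+1) (by omega) (n+1) (by omega)
        rw [Real.dist_eq] at hd
        calc N (f m - f n) ≤ S (m+1) - S (n+1) := hb
          _ ≤ |S (m+1) - S (n+1)| := le_abs_self _
          _ < ε := hd
      · have hb := hblock n m h
        have hd := hB (n+1) (by omega) (m+1) (by omega)
        rw [Real.dist_eq] at hd
        have he : N (f m - f n) = N (f n - f m) := by rw [← hNneg (f n - f m), neg_sub]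
        rw [he]
        calc N (f n - f m) ≤ S (n+1) - S (m+1) := hb
          _ ≤ |S (n+1) - S (m+1)| := le_abs_self _
          _ < ε := hd
    obtain ⟨l, hl⟩ := hcomp f hfc
    have htend : ∀ ε > (0:ℝ), ∃ n₀, ∀ n ≥ n₀, N (f n - l) < ε := by
      intro ε hε
      obtain ⟨n₀, hn₀⟩ := Metric.tendsto_atTop.mp hl ε hε
      refine ⟨n₀, fun n hn => ?_⟩
      have h := hn₀ n hn
      rwa [Real.dist_eq, sub_zero, abs_of_nonneg (hnonneg _)] at h
    have hmono : Monotone f := monotone_nat_of_le_succ (by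
      intro n
      show (∑ i ∈ Finset.range (n+1), x i) ≤ ∑ i ∈ Finset.range (n+1+1), x i
      rw [Finset.sum_range_succ x (n+1)]
      exact le_add_of_nonneg_right (hx0 _))
    refine ⟨l, ?_, ?_⟩
    · rintro _ ⟨m, rfl⟩
      show f m ≤ l
      rw [← sub_nonpos, ← posPart_eq_zero]
      refine hzero _ (fun δ hδ => ?_)
      obtain ⟨n₀, hn₀⟩ := htend δ hδ
      set n := max m n₀ with hndef
      have h1 : (f m - l)⁺ ≤ (f n - l)⁺ :=
        sup_le_sup_right (sub_le_sub_right (hmono (le_max_left m n₀)) l) 0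
      have h2 : (f n - l)⁺ ≤ |f n - l| := sup_le (le_abs_self _) (abs_nonneg _)
      have h3 : N ((f m - l)⁺) ≤ N (f n - l) := by
        refine hlat _ _ ?_
        rw [abs_of_nonneg (posPart_nonneg _)]
        exact le_trans h1 h2
      exact lt_of_le_of_lt h3 (hn₀ n (le_max_right m n₀))
    · intro b hb
      show l ≤ b
      rw [← sub_nonpos, ← posPart_eq_zero]
      refine hzero _ (fun δ hδ => ?_)
      obtain ⟨n₀, hn₀⟩ := htend δ hδ
      have hfb : f n₀ ≤ b := hb ⟨n₀, rfl⟩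
      have h1 : (l - b)⁺ ≤ (l - f n₀)⁺ := sup_le_sup_right (sub_le_sub_left hfb l) 0
      have h2 : (l - f n₀)⁺ ≤ |l - f n₀| := sup_le (le_abs_self _) (abs_nonneg _)
      have h3 : N ((l - b)⁺) ≤ N (f n₀ - l) := by
        refine hlat _ _ ?_
        rw [abs_of_nonneg (posPart_nonneg _), abs_sub_comm]
        exact le_trans h1 h2
      exact lt_of_le_of_lt h3 (hn₀ n₀ le_rfl)
  · -- Riesz–Fischer property → completeness
    intro hRF f hf
    have hε'pos : ∀ k : ℕ, (0:ℝ) < (1/(4*K))^(k+2) := fun k => by positivity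
    have hM : ∀ k : ℕ, ∃ M, ∀ m ≥ M, ∀ n ≥ M, N (f m - f n) < (1/(4*K))^(k+2) :=
      fun k => hf _ (hε'pos k)
    choose M hMspec using hM
    set nn : ℕ → ℕ := fun k => Nat.rec (M 0) (fun k nk => max (nk+1) (M (k+1))) k
      with hnndef
    have hnn_succ : ∀ k, nn (k+1) = max (nn k + 1) (M (k+1)) := fun k => rfl
    have hnnM : ∀ k, M k ≤ nn k := by
      intro k
      cases k with
      | zero => exact le_rfl
      | succ k => rw [hnn_succ]; exact le_max_right _ _
    have hnn_mono : ∀ k, nn k < nn (k+1) := by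
      intro k
      rw [hnn_succ]
      exact lt_of_lt_of_le (Nat.lt_succ_self _) (le_max_left _ _)
    have hnn_ge : ∀ k, k ≤ nn k := by
      intro k
      induction k with
      | zero => exact Nat.zero_le _
      | succ k ih => exact lt_of_le_of_lt ih (hnn_mono k)
    set d : ℕ → X := fun k => f (nn (k+1)) - f (nn k) with hddef
    have hd : ∀ k, N (d k) < (1/(4*K))^(k+2) := by
      intro k
      exact hMspec k _ (le_trans (hnnM k) (le_of_lt (hnn_mono k))) _ (hnnM k)
    have hεle : ∀ k : ℕ, ((1:ℝ)/(4*K))^(k+2) ≤ (1/(4*K))^(k+1) := by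
      intro k
      refine pow_le_pow_of_le_one (by positivity) ?_ (by omega)
      rw [div_le_one (by linarith)]
      linarith
    have habs_p : ∀ k, N ((d k)⁺) ≤ (1/(4*K))^(k+1) := by
      intro k
      refine le_trans (le_trans (hlat _ _ ?_) (le_of_lt (hd k))) (hεle k)
      rw [abs_of_nonneg (posPart_nonneg _)]
      exact sup_le (le_abs_self _) (abs_nonneg _)
    have habs_q : ∀ k, N ((d k)⁻) ≤ (1/(4*K))^(k+1) := by
      intro k
      refine le_trans (le_trans (hlat _ _ ?_) (le_of_lt (hd k))) (hεle k)
      rw [abs_of_nonneg (negPart_nonneg _)]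
      exact sup_le (neg_le_abs _) (abs_nonneg _)
    obtain ⟨sp, hsp⟩ := rf_key N K hK hnonneg hsmul hlat hRF (fun k => (d k)⁺)
      (fun k => posPart_nonneg _) habs_p
    obtain ⟨sq, hsq⟩ := rf_key N K hK hnonneg hsmul hlat hRF (fun k => (d k)⁻)
      (fun k => negPart_nonneg _) habs_q
    set l : X := f (nn 0) + sp - sq with hldef
    have htel : ∀ m, (∑ k ∈ Finset.range (m+1), (d k)⁺)
        - (∑ k ∈ Finset.range (m+1), (d k)⁻) = f (nn (m+1)) - f (nn 0) := by
      intro m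
      rw [← Finset.sum_sub_distrib]
      calc ∑ k ∈ Finset.range (m+1), ((d k)⁺ - (d k)⁻)
          = ∑ k ∈ Finset.range (m+1), (f (nn (k+1)) - f (nn k)) :=
            Finset.sum_congr rfl (fun k _ => by rw [posPart_sub_negPart])
        _ = f (nn (m+1)) - f (nn 0) := Finset.sum_range_sub (fun k => f (nn k)) (m+1)
    have hsub : ∀ m, N (f (nn (m+1)) - l) ≤
        K * (N ((∑ k ∈ Finset.range (m+1), (d k)⁺) - sp)
          + N ((∑ k ∈ Finset.range (m+1), (d k)⁻) - sq)) := by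
      intro m
      have h0 := htel m
      have h2 : f (nn (m+1)) = (∑ k ∈ Finset.range (m+1), (d k)⁺)
          - (∑ k ∈ Finset.range (m+1), (d k)⁻) + f (nn 0) := by
        rw [h0]; abel
      have he : f (nn (m+1)) - l = ((∑ k ∈ Finset.range (m+1), (d k)⁺) - sp)
          + -((∑ k ∈ Finset.range (m+1), (d k)⁻) - sq) := by
        rw [hldef, h2]; abel
      calc N (f (nn (m+1)) - l)
          = N (((∑ k ∈ Finset.range (m+1), (d k)⁺) - sp)
              + -((∑ k ∈ Finset.range (m+1), (d k)⁻) - sq)) := by rw [he]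
        _ ≤ K * (N ((∑ k ∈ Finset.range (m+1), (d k)⁺) - sp)
              + N (-((∑ k ∈ Finset.range (m+1), (d k)⁻) - sq))) := htri _ _
        _ = K * (N ((∑ k ∈ Finset.range (m+1), (d k)⁺) - sp)
              + N ((∑ k ∈ Finset.range (m+1), (d k)⁻) - sq)) := by rw [hNneg]
    have final : ∀ ε > (0:ℝ), ∃ n₀, ∀ j ≥ n₀, N (f j - l) < ε := by
      intro ε hε
      obtain ⟨M', hM'⟩ := hf (ε/(2*K)) (by positivity)
      obtain ⟨kp, hkp⟩ := hsp (ε/(2*K)/(2*K)) (by positivity)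
      obtain ⟨kq, hkq⟩ := hsq (ε/(2*K)/(2*K)) (by positivity)
      set k := max (max kp kq) M' with hkdef
      have h1 : N (f (nn (k+1)) - l) < ε/(2*K) := by
        refine lt_of_le_of_lt (hsub k) ?_
        have a1 := hkp k (le_trans (le_max_left _ _) (le_max_left _ _))
        have a2 := hkq k (le_trans (le_max_right _ _) (le_max_left _ _))
        calc K * (N ((∑ i ∈ Finset.range (k+1), (d i)⁺) - sp)
              + N ((∑ i ∈ Finset.range (k+1), (d i)⁻) - sq))
            < K * (ε/(2*K)/(2*K) + ε/(2*K)/(2*K)) :=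
              mul_lt_mul_of_pos_left (add_lt_add a1 a2) hK0
          _ = ε/(2*K) := by field_simp; ring
      refine ⟨M', fun j hj => ?_⟩
      have hj2 : M' ≤ nn (k+1) := by
        have : M' ≤ k := le_max_right _ _
        have := hnn_ge (k+1)
        omega
      have h2 : N (f j - f (nn (k+1))) < ε/(2*K) := hM' j hj _ hj2
      have he2 : f j - l = (f j - f (nn (k+1))) + (f (nn (k+1)) - l) := by abel
      calc N (f j - l) = N ((f j - f (nn (k+1))) + (f (nn (k+1)) - l)) := by rw [he2]
        _ ≤ K * (N (f j - f (nn (k+1))) + N (f (nn (k+1)) - l)) := htri _ _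
        _ < K * (ε/(2*K) + ε/(2*K)) := mul_lt_mul_of_pos_left (add_lt_add h2 h1) hK0
        _ = ε := by field_simp; ring
    refine ⟨l, Metric.tendsto_atTop.mpr (fun ε hε => ?_)⟩
    obtain ⟨n₀, hn₀⟩ := final ε hε
    refine ⟨n₀, fun n hn => ?_⟩
    rw [Real.dist_eq, sub_zero, abs_of_nonneg (hnonneg _)]
    exact hn₀ n hn
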